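/- Let ab and cd be a pair of non-adjacent edges of V_8 such that the graph obtained from V_8 by bridging ab and cd is isomorphic to V_{10}. Then some 4-cycle of V_8 contains both ab and cd; that is, V_{10} can only be obtained from V_8 by bridging a pair of edges with cycle spread exactly (1,1). -/

import Mathlib

open SimpleGraph

/-- A graph is cubic if every vertex has exactly 3 neighbors. -/
def CubicGraph {V : Type*} (G : SimpleGraph V) : Prop :=
  ∀ v : V, (G.neighborSet v).ncard = 3

/-- `G` is `k`-connected: more than `k` vertices, and deleting any set of
fewer than `k` vertices leaves a connected graph. -/
def KConn {V : Type*} [Fintype V] (k : ℕ) (G : SimpleGraph V) : Prop :=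
  k < Fintype.card V ∧
  ∀ S : Finset V, S.card < k → (G.induce ((↑S : Set V)ᶜ)).Connected

/-- There is a cycle through `v` in `G`. -/
def HasCycleAt {V : Type*} (G : SimpleGraph V) (v : V) : Prop :=
  ∃ c : G.Walk v v, c.IsCycle

/-- A set `X` of edges is cycle-separating: after deleting `X`, at least two
distinct connected components contain cycles. -/
def CycleSeparating {V : Type*} (G : SimpleGraph V) (X : Set (Sym2 V)) : Prop :=
  ∃ u v : V, HasCycleAt (G.deleteEdges X) u ∧ HasCycleAt (G.deleteEdges X) v ∧
    (G.deleteEdges X).connectedComponentMk u ≠ (G.deleteEdges X).connectedComponentMk v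

/-- A cubic graph is cyclically `k`-connected if it is 3-connected, has at least
`2k` vertices, and has no cycle-separating edge-cut of size less than `k`. -/
def CyclicallyKConn {V : Type*} [Fintype V] (k : ℕ) (G : SimpleGraph V) : Prop :=
  KConn 3 G ∧ 2 * k ≤ Fintype.card V ∧
  ∀ X : Finset (Sym2 V), ↑X ⊆ G.edgeSet → X.card < k → ¬ CycleSeparating G ↑X

/-- Edges `ab` and `cd` are non-adjacent edges of `G` (they share no endpoint). -/
def NonadjPair {V : Type*} (G : SimpleGraph V) (a b c d : V) : Prop :=
  G.Adj a b ∧ G.Adj c d ∧ a ≠ c ∧ a ≠ d ∧ b ≠ c ∧ b ≠ d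

/-- The graph obtained from `H` by bridging edges `ab` and `cd`: subdivide `ab`
with a new vertex `x = Sum.inr 0`, subdivide `cd` with a new vertex `y = Sum.inr 1`,
and join `x` to `y`. -/
def Bridge {V : Type*} (H : SimpleGraph V) (a b c d : V) : SimpleGraph (V ⊕ Fin 2) :=
  SimpleGraph.fromEdgeSet
    ((Sym2.map Sum.inl '' (H.edgeSet \ {s(a, b), s(c, d)})) ∪
      {s(Sum.inr 0, Sum.inl a), s(Sum.inr 0, Sum.inl b),
       s(Sum.inr 1, Sum.inl c), s(Sum.inr 1, Sum.inl d),
       s(Sum.inr 0, Sum.inr 1)})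

/-- Both edges `e` and `f` lie on a common 4-cycle of `G`. -/
def InCommonCycle4 {V : Type*} (G : SimpleGraph V) (e f : Sym2 V) : Prop :=
  ∃ (v : V) (c : G.Walk v v), c.IsCycle ∧ c.length = 4 ∧ e ∈ c.edges ∧ f ∈ c.edges

/-- The ladder `Q_{2k}`: the Cartesian product of the cycle `C_k` with `K_2`. -/
def LadderQ (k : ℕ) : SimpleGraph (Fin k × Fin 2) :=
  SimpleGraph.cycleGraph k □ completeGraph (Fin 2)

/-- The Möbius ladder `V_{2k}`: the circulant graph on `ZMod (2k)` with
connection set `{1, -1, k}`. -/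
def MobiusV (k : ℕ) : SimpleGraph (ZMod (2 * k)) :=
  SimpleGraph.circulantGraph {1, -1, (k : ZMod (2 * k))}

/-- The Petersen graph: vertices are the 2-element subsets of a 5-element set,
adjacent iff disjoint (the Kneser graph K(5,2)). -/
def Petersen : SimpleGraph {s : Finset (Fin 5) // s.card = 2} where
  Adj s t := Disjoint (s : Finset (Fin 5)) (t : Finset (Fin 5))
  symm := ⟨fun s t h => h.symm⟩
  loopless := ⟨fun s h => by
    have h2 := s.2
    simp only [disjoint_self, Finset.bot_eq_empty] at h
    rw [h] at h2
    simp at h2⟩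


/-! ### Auxiliary machinery for Statement 18 -/

lemma mobius_adj (k : ℕ) (u v : ZMod (2 * k)) :
    (MobiusV k).Adj u v ↔ u ≠ v ∧ (u - v = 1 ∨ u - v = -1 ∨ u - v = (k : ZMod (2*k))
      ∨ v - u = 1 ∨ v - u = -1 ∨ v - u = (k : ZMod (2*k))) := by
  simp only [MobiusV, circulantGraph_adj, Set.mem_insert_iff, Set.mem_singleton_iff]
  tauto

instance mobiusDec (k : ℕ) : DecidableRel (MobiusV k).Adj :=
  fun u v => decidable_of_iff _ (mobius_adj k u v).symm

/-- An explicit decidable description of the adjacency of `Bridge (MobiusV 4) a b c d`. -/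
def BAdj (a b c d : ZMod (2*4)) : (ZMod (2*4) ⊕ Fin 2) → (ZMod (2*4) ⊕ Fin 2) → Prop
  | .inl p, .inl q => (MobiusV 4).Adj p q ∧ ¬(p = a ∧ q = b) ∧ ¬(p = b ∧ q = a)
      ∧ ¬(p = c ∧ q = d) ∧ ¬(p = d ∧ q = c)
  | .inl p, .inr i => (i = 0 ∧ (p = a ∨ p = b)) ∨ (i = 1 ∧ (p = c ∨ p = d))
  | .inr i, .inl q => (i = 0 ∧ (q = a ∨ q = b)) ∨ (i = 1 ∧ (q = c ∨ q = d))
  | .inr i, .inr j => i ≠ j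

instance BAdj.dec (a b c d : ZMod (2*4)) : DecidableRel (BAdj a b c d) := fun u v => by
  cases u <;> cases v <;> unfold BAdj <;> infer_instance

lemma bridge_adj (a b c d : ZMod (2*4)) (u v : ZMod (2*4) ⊕ Fin 2) :
    (Bridge (MobiusV 4) a b c d).Adj u v ↔ BAdj a b c d u v := by
  cases u with
  | inl p =>
    cases v with
    | inl q =>
      simp only [Bridge, fromEdgeSet_adj, Set.mem_union, Set.mem_image, Set.mem_diff,
        Set.mem_insert_iff, Set.mem_singleton_iff, Sym2.exists, Sym2.map_pair_eq,
        Sym2.eq_iff, mem_edgeSet, BAdj, ne_eq, Sum.inl.injEq, reduceCtorEq]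
      constructor
      · rintro ⟨(⟨x, y, ⟨hadj, hne⟩, (⟨rfl, rfl⟩ | ⟨rfl, rfl⟩)⟩ | h), hpq⟩
        · tauto
        · exact ⟨hadj.symm, by tauto⟩
        · tauto
      · rintro ⟨hadj, h⟩
        exact ⟨Or.inl ⟨p, q, ⟨hadj, by tauto⟩, by tauto⟩, hadj.ne⟩
    | inr i =>
      simp only [Bridge, fromEdgeSet_adj, Set.mem_union, Set.mem_image, Set.mem_diff,
        Set.mem_insert_iff, Set.mem_singleton_iff, Sym2.exists, Sym2.map_pair_eq,
        Sym2.eq_iff, mem_edgeSet, BAdj, ne_eq, Sum.inl.injEq, Sum.inr.injEq, reduceCtorEq,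
        false_and, and_false, false_or, or_false, exists_false, not_false_iff, and_true,
        exists_const]
      tauto
  | inr i =>
    cases v with
    | inl q =>
      simp only [Bridge, fromEdgeSet_adj, Set.mem_union, Set.mem_image, Set.mem_diff,
        Set.mem_insert_iff, Set.mem_singleton_iff, Sym2.exists, Sym2.map_pair_eq,
        Sym2.eq_iff, mem_edgeSet, BAdj, ne_eq, Sum.inl.injEq, Sum.inr.injEq, reduceCtorEq,
        false_and, and_false, false_or, or_false, exists_false, not_false_iff, and_true,
        exists_const]
      tauto
    | inr j =>
      simp only [Bridge, fromEdgeSet_adj, Set.mem_union, Set.mem_image, Set.mem_diff,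
        Set.mem_insert_iff, Set.mem_singleton_iff, Sym2.exists, Sym2.map_pair_eq,
        Sym2.eq_iff, mem_edgeSet, BAdj, ne_eq, Sum.inr.injEq, reduceCtorEq,
        false_and, and_false, false_or, or_false, exists_false, not_false_iff, and_true,
        exists_const]
      fin_cases i <;> fin_cases j <;> decide

/-- The number of vertices at distance exactly two from `v` (w.r.t. a relation `A`). -/
def n2cnt {V : Type*} [Fintype V] [DecidableEq V] (A : V → V → Prop) [DecidableRel A]
    (v : V) : ℕ :=
  Fintype.card {q : V // q ≠ v ∧ ¬ A v q ∧ ∃ p, A v p ∧ A p q}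

lemma n2cnt_congr {V : Type*} [Fintype V] [DecidableEq V] (A B : V → V → Prop)
    [DecidableRel A] [DecidableRel B] (h : ∀ u v, A u v ↔ B u v) (v : V) :
    n2cnt A v = n2cnt B v := by
  apply Fintype.card_congr
  apply Equiv.subtypeEquivRight
  intro q
  simp only [h]

lemma n2cnt_iso {V W : Type*} [Fintype V] [Fintype W] [DecidableEq V] [DecidableEq W]
    {G : SimpleGraph V} {H : SimpleGraph W} [DecidableRel G.Adj] [DecidableRel H.Adj]
    (e : G ≃g H) (v : V) : n2cnt G.Adj v = n2cnt H.Adj (e v) := by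
  apply Fintype.card_congr
  apply e.toEquiv.subtypeEquiv
  intro q
  constructor
  · rintro ⟨h1, h2, p, h3, h4⟩
    refine ⟨fun h => h1 (e.toEquiv.injective h), fun h => h2 (e.map_adj_iff.mp h), e p,
      e.map_adj_iff.mpr h3, e.map_adj_iff.mpr h4⟩
  · rintro ⟨h1, h2, p', h3, h4⟩
    refine ⟨fun h => h1 (by rw [h]; rfl), fun h => h2 (e.map_adj_iff.mpr h), e.symm p', ?_, ?_⟩
    · have := e.map_adj_iff (v := v) (w := e.symm p')
      rw [e.apply_symm_apply] at this
      exact this.mp h3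
    · have := e.map_adj_iff (v := e.symm p') (w := q)
      rw [e.apply_symm_apply] at this
      exact this.mp h4

lemma v10_n2 : ∀ w : ZMod (2*5), n2cnt (MobiusV 5).Adj w = 4 := by decide

instance nadjDec {V : Type*} (G : SimpleGraph V) [DecidableRel G.Adj] [DecidableEq V]
    (a b c d : V) : Decidable (NonadjPair G a b c d) :=
  inferInstanceAs (Decidable (G.Adj a b ∧ G.Adj c d ∧ a ≠ c ∧ a ≠ d ∧ b ≠ c ∧ b ≠ d))

set_option maxHeartbeats 4000000 in
lemma master : ∀ a b c d : ZMod (2*4), NonadjPair (MobiusV 4) a b c d →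
    n2cnt (BAdj a b c d) (Sum.inr 0) = 4 → n2cnt (BAdj a b c d) (Sum.inr 1) = 4 →
    ((MobiusV 4).Adj b c ∧ (MobiusV 4).Adj d a) ∨
      ((MobiusV 4).Adj b d ∧ (MobiusV 4).Adj c a) := by
  decide

lemma cycle4 {V : Type*} {G : SimpleGraph V} {p q r s : V}
    (h1 : G.Adj p q) (h2 : G.Adj q r) (h3 : G.Adj r s) (h4 : G.Adj s p)
    (hpr : p ≠ r) (hqs : q ≠ s) :
    ∃ c : G.Walk p p, c.IsCycle ∧ c.length = 4 ∧ s(p, q) ∈ c.edges ∧ s(r, s) ∈ c.edges := by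
  refine ⟨Walk.cons h1 (Walk.cons h2 (Walk.cons h3 (Walk.cons h4 Walk.nil))), ?_, by simp,
    by simp, by simp⟩
  have := h1.ne; have := h2.ne; have := h3.ne; have := h4.ne
  simp_all [Walk.isCycle_def, Walk.isTrail_def, Sym2.eq_iff, ne_comm]


theorem stmt18 (a b c d : ZMod (2 * 4))
    (hpair : NonadjPair (MobiusV 4) a b c d)
    (hiso : Nonempty (Bridge (MobiusV 4) a b c d ≃g MobiusV 5)) :
    InCommonCycle4 (MobiusV 4) s(a, b) s(c, d) := by
  obtain ⟨e⟩ := hiso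
  haveI : DecidableRel (Bridge (MobiusV 4) a b c d).Adj :=
    fun u v => decidable_of_iff _ (bridge_adj a b c d u v).symm
  have h0 : n2cnt (BAdj a b c d) (Sum.inr 0) = 4 := by
    rw [← n2cnt_congr _ _ (bridge_adj a b c d), n2cnt_iso e]
    exact v10_n2 _
  have h1 : n2cnt (BAdj a b c d) (Sum.inr 1) = 4 := by
    rw [← n2cnt_congr _ _ (bridge_adj a b c d), n2cnt_iso e]
    exact v10_n2 _
  have key := master a b c d hpair h0 h1
  obtain ⟨hab, hcd, hac, had, hbc, hbd⟩ := hpair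
  rcases key with ⟨k1, k2⟩ | ⟨k1, k2⟩
  · obtain ⟨w, hw, hl, e1, e2⟩ := cycle4 hab k1 hcd k2 hac hbd
    exact ⟨a, w, hw, hl, e1, e2⟩
  · obtain ⟨w, hw, hl, e1, e2⟩ := cycle4 hab k1 hcd.symm k2 had hbc
    rw [Sym2.eq_swap] at e2
    exact ⟨a, w, hw, hl, e1, e2⟩
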